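/- Let e₁, e₂, e₃ ∈ ℝ² satisfy e₁ + e₂ + e₃ = 0 with e₁ and e₂ linearly independent, and let S̄ = (s̄₁,s̄₂,s̄₃) ∈ ℝ³ with all s̄ᵢ > 0. Then for every s_c ∈ ℝ: ‖R(e)ᵀ(r(e) − s̃*(e) S̄)‖² − ‖R(e)ᵀ(r(e) − s_c S̄)‖² = −(1/s_D(e)) · ((r(e) − s_c S̄)ᵀ D r(e))² ≤ 0, with equality if and only if s_c = s̃*(e). In particular, the instantaneous cost with the time-varying scale s̃*(e) never exceeds the instantaneous cost with any constant scale s_c. -/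

import Mathlib

set_option maxHeartbeats 1000000


open Matrix

noncomputable section

/-- The plane `ℝ²` with the Euclidean norm. -/
abbrev E2 := EuclideanSpace ℝ (Fin 2)

/-- Oriented incidence matrix of the triangle graph. -/
def Hmat : Matrix (Fin 3) (Fin 3) ℝ := !![-1, 1, 0; 0, -1, 1; 1, 0, -1]

/-- Expanded incidence matrix `Ĥ = H ⊗ I₂`. -/
def Hhat : Matrix (Fin 3 × Fin 2) (Fin 3 × Fin 2) ℝ :=
  Matrix.kroneckerMap (· * ·) Hmat (1 : Matrix (Fin 2) (Fin 2) ℝ)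

/-- `Λ(e) ∈ ℝ^{6×3}`: block-diagonal matrix with `2×1` blocks `e₁, e₂, e₃`. -/
def Lam (e : Fin 3 → E2) : Matrix (Fin 3 × Fin 2) (Fin 3) ℝ :=
  fun p j => if p.1 = j then e j p.2 else 0

/-- The rigidity matrix `R(e) = Λ(e)ᵀ Ĥ ∈ ℝ^{3×6}`. -/
def Rmat (e : Fin 3 → E2) : Matrix (Fin 3) (Fin 3 × Fin 2) ℝ := (Lam e)ᵀ * Hhat

/-- The rigidity function `r(e)ᵢ = ½‖eᵢ‖²`. -/
def rvec (e : Fin 3 → E2) : Fin 3 → ℝ := fun i => (1 / 2) * ‖e i‖ ^ 2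

/-- The matrix `D` built from the desired shape `S̄ = (s̄₁, s̄₂, s̄₃)`. -/
def Dmat (sb : Fin 3 → ℝ) : Matrix (Fin 3) (Fin 3) ℝ :=
  !![4 * sb 0 + sb 1 + sb 2, sb 1 - sb 2, sb 2 - sb 1;
     sb 0 - sb 2, sb 0 + 4 * sb 1 + sb 2, sb 2 - sb 0;
     sb 0 - sb 1, sb 1 - sb 0, sb 0 + sb 1 + 4 * sb 2]

/-- `s_N(e) = r(e)ᵀ D r(e)`. -/
def sN (sb : Fin 3 → ℝ) (e : Fin 3 → E2) : ℝ := rvec e ⬝ᵥ (Dmat sb *ᵥ rvec e)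

/-- `s_D(e) = S̄ᵀ D r(e)`. -/
def sD (sb : Fin 3 → ℝ) (e : Fin 3 → E2) : ℝ := sb ⬝ᵥ (Dmat sb *ᵥ rvec e)

/-- The time-varying scale function `s̃*(e) = s_N(e)/s_D(e)`. -/
def stilde (sb : Fin 3 → ℝ) (e : Fin 3 → E2) : ℝ := sN sb e / sD sb e

/-- The instantaneous cost `‖R(e)ᵀ (r(e) − θ S̄)‖²` at scale `θ`. -/
def cost (sb : Fin 3 → ℝ) (e : Fin 3 → E2) (θ : ℝ) : ℝ :=
  ((Rmat e)ᵀ *ᵥ (rvec e - θ • sb)) ⬝ᵥ ((Rmat e)ᵀ *ᵥ (rvec e - θ • sb))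

/-- The control gain `M(e) = s_D² I₃ − s_D S̄ r(e)ᵀ (Dᵀ + D) + s_N S̄ S̄ᵀ D`. -/
def Mmat (sb : Fin 3 → ℝ) (e : Fin 3 → E2) : Matrix (Fin 3) (Fin 3) ℝ :=
  (sD sb e) ^ 2 • (1 : Matrix (Fin 3) (Fin 3) ℝ)
    - (sD sb e) • (vecMulVec sb (rvec e) * ((Dmat sb)ᵀ + Dmat sb))
    + (sN sb e) • (vecMulVec sb sb * Dmat sb)

/-- `N(e) = (1/s_D²)(s_D Λ(e)(Dᵀ + D) r(e) − s_N Λ(e) Dᵀ S̄) ∈ ℝ⁶`,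
the gradient of the scale function `s̃*`. -/
def Nvec (sb : Fin 3 → ℝ) (e : Fin 3 → E2) : Fin 3 × Fin 2 → ℝ :=
  (1 / (sD sb e) ^ 2) •
    ((sD sb e) • (Lam e *ᵥ (((Dmat sb)ᵀ + Dmat sb) *ᵥ rvec e))
      - (sN sb e) • (Lam e *ᵥ ((Dmat sb)ᵀ *ᵥ sb)))

end

lemma norm_sq_E2 (x : E2) : ‖x‖ ^ 2 = x 0 ^ 2 + x 1 ^ 2 := by
  rw [EuclideanSpace.norm_eq, Real.sq_sqrt (by positivity)]
  simp [Fin.sum_univ_succ, sq_abs]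

lemma hR (e : Fin 3 → E2) (i k : Fin 3) (a : Fin 2) :
    Rmat e i (k, a) = Hmat i k * e i a := by
  simp [Rmat, Hhat, Lam, Matrix.mul_apply, Fintype.sum_prod_type, Fin.sum_univ_three,
    Fin.sum_univ_two, Matrix.one_apply]
  fin_cases a <;> simp <;> ring

lemma quad_form (e : Fin 3 → E2) (v : Fin 3 → ℝ) :
    ((Rmat e)ᵀ *ᵥ v) ⬝ᵥ ((Rmat e)ᵀ *ᵥ v) =
      (-(e 0 0 * v 0) + e 2 0 * v 2) ^ 2 + (-(e 0 1 * v 0) + e 2 1 * v 2) ^ 2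
      + (e 0 0 * v 0 - e 1 0 * v 1) ^ 2 + (e 0 1 * v 0 - e 1 1 * v 1) ^ 2
      + (e 1 0 * v 1 - e 2 0 * v 2) ^ 2 + (e 1 1 * v 1 - e 2 1 * v 2) ^ 2 := by
  simp only [dotProduct, Matrix.mulVec, Matrix.transpose_apply, Fintype.sum_prod_type,
    Fin.sum_univ_three, Fin.sum_univ_two, hR, Hmat, Matrix.cons_val', Matrix.cons_val_zero,
    Matrix.cons_val_one, Matrix.head_cons, Matrix.head_fin_const, Matrix.empty_val',
    Matrix.cons_val_fin_one, dotProduct]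
  norm_num [Matrix.cons_val_two, Matrix.vecHead, Matrix.vecTail]
  ring

lemma cost_eval (sb : Fin 3 → ℝ) (e : Fin 3 → E2) (θ : ℝ) :
    cost sb e θ =
      (-(e 0 0 * (rvec e 0 - θ * sb 0)) + e 2 0 * (rvec e 2 - θ * sb 2)) ^ 2
      + (-(e 0 1 * (rvec e 0 - θ * sb 0)) + e 2 1 * (rvec e 2 - θ * sb 2)) ^ 2
      + (e 0 0 * (rvec e 0 - θ * sb 0) - e 1 0 * (rvec e 1 - θ * sb 1)) ^ 2
      + (e 0 1 * (rvec e 0 - θ * sb 0) - e 1 1 * (rvec e 1 - θ * sb 1)) ^ 2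
      + (e 1 0 * (rvec e 1 - θ * sb 1) - e 2 0 * (rvec e 2 - θ * sb 2)) ^ 2
      + (e 1 1 * (rvec e 1 - θ * sb 1) - e 2 1 * (rvec e 2 - θ * sb 2)) ^ 2 := by
  rw [show cost sb e θ
      = ((Rmat e)ᵀ *ᵥ (rvec e - θ • sb)) ⬝ᵥ ((Rmat e)ᵀ *ᵥ (rvec e - θ • sb)) from rfl,
    quad_form]
  simp [Pi.sub_apply, Pi.smul_apply]

lemma dotD_eval (sb u v : Fin 3 → ℝ) : u ⬝ᵥ (Dmat sb *ᵥ v) =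
      u 0 * ((4 * sb 0 + sb 1 + sb 2) * v 0 + (sb 1 - sb 2) * v 1 + (sb 2 - sb 1) * v 2)
    + u 1 * ((sb 0 - sb 2) * v 0 + (sb 0 + 4 * sb 1 + sb 2) * v 1 + (sb 2 - sb 0) * v 2)
    + u 2 * ((sb 0 - sb 1) * v 0 + (sb 1 - sb 0) * v 1 + (sb 0 + sb 1 + 4 * sb 2) * v 2) := by
  simp [Dmat, Matrix.mulVec, dotProduct, Fin.sum_univ_three]

/-- For a non-collinear closed triangle and a shape `S̄` with
positive entries, for every constant scale `s_c ∈ ℝ`: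
`‖R(e)ᵀ(r(e) − s̃*(e)S̄)‖² − ‖R(e)ᵀ(r(e) − s_c S̄)‖²
  = −(1/s_D(e))·((r(e) − s_c S̄)ᵀ D r(e))² ≤ 0`,
with equality iff `s_c = s̃*(e)`.  In particular the instantaneous cost with
the time-varying scale never exceeds that with any constant scale. -/
theorem cost_stilde_le_cost_const (e : Fin 3 → E2) (hsum : e 0 + e 1 + e 2 = 0)
    (hind : LinearIndependent ℝ ![e 0, e 1])
    (sb : Fin 3 → ℝ) (hsb : ∀ i, 0 < sb i) :
    ∀ sc : ℝ,
      (cost sb e (stilde sb e) - cost sb e sc =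
        -(1 / sD sb e) * ((rvec e - sc • sb) ⬝ᵥ (Dmat sb *ᵥ rvec e)) ^ 2) ∧
      cost sb e (stilde sb e) ≤ cost sb e sc ∧
      (cost sb e (stilde sb e) = cost sb e sc ↔ sc = stilde sb e) := by
  intro sc
  have hx2 : e 2 0 = -(e 0 0 + e 1 0) := by
    have h : e 0 0 + e 1 0 + e 2 0 = 0 := by simpa using congrArg (fun v : E2 => v 0) hsum
    linarith
  have hy2 : e 2 1 = -(e 0 1 + e 1 1) := by
    have h : e 0 1 + e 1 1 + e 2 1 = 0 := by simpa using congrArg (fun v : E2 => v 1) hsum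
    linarith
  have hrv : ∀ i, rvec e i = (e i 0 ^ 2 + e i 1 ^ 2) / 2 := by
    intro i; simp [rvec, norm_sq_E2]; ring
  have hsN : sN sb e = rvec e ⬝ᵥ (Dmat sb *ᵥ rvec e) := rfl
  have hsD : sD sb e = sb ⬝ᵥ (Dmat sb *ᵥ rvec e) := rfl
  -- quadratic form of the cost
  have hquad : ∀ θ : ℝ, cost sb e θ =
      cost sb e 0 - 2 * sN sb e * θ + sD sb e * θ ^ 2 := by
    intro θ
    rw [cost_eval sb e θ, cost_eval sb e 0, hsN, hsD, dotD_eval, dotD_eval]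
    simp only [hrv]
    rw [hx2, hy2]
    ring
  -- sD as a sum of squares
  have hsDeq : sD sb e =
      (-(e 0 0 * sb 0) + e 2 0 * sb 2) ^ 2 + (-(e 0 1 * sb 0) + e 2 1 * sb 2) ^ 2
      + (e 0 0 * sb 0 - e 1 0 * sb 1) ^ 2 + (e 0 1 * sb 0 - e 1 1 * sb 1) ^ 2
      + (e 1 0 * sb 1 - e 2 0 * sb 2) ^ 2 + (e 1 1 * sb 1 - e 2 1 * sb 2) ^ 2 := by
    rw [hsD, dotD_eval]
    simp only [hrv]
    rw [hx2, hy2]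
    ring
  -- positivity of sD
  have hsDpos : 0 < sD sb e := by
    rcases lt_or_eq_of_le (by rw [hsDeq]; positivity : (0:ℝ) ≤ sD sb e) with h | h
    · exact h
    · exfalso
      have hsum0 :
          (-(e 0 0 * sb 0) + e 2 0 * sb 2) ^ 2 + (-(e 0 1 * sb 0) + e 2 1 * sb 2) ^ 2
          + (e 0 0 * sb 0 - e 1 0 * sb 1) ^ 2 + (e 0 1 * sb 0 - e 1 1 * sb 1) ^ 2
          + (e 1 0 * sb 1 - e 2 0 * sb 2) ^ 2 + (e 1 1 * sb 1 - e 2 1 * sb 2) ^ 2 = 0 := by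
        rw [← hsDeq]; exact h.symm
      have key : ∀ a b c d f g : ℝ, 0 ≤ a → 0 ≤ b → 0 ≤ c → 0 ≤ d → 0 ≤ f → 0 ≤ g →
          a + b + c + d + f + g = 0 → c = 0 ∧ d = 0 := by
        intro a b c d f g ha hb hc hd hf hg hsum
        constructor <;> linarith
      have hkey := key _ _ _ _ _ _ (sq_nonneg (-(e 0 0 * sb 0) + e 2 0 * sb 2))
        (sq_nonneg (-(e 0 1 * sb 0) + e 2 1 * sb 2))
        (sq_nonneg (e 0 0 * sb 0 - e 1 0 * sb 1))
        (sq_nonneg (e 0 1 * sb 0 - e 1 1 * sb 1))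
        (sq_nonneg (e 1 0 * sb 1 - e 2 0 * sb 2))
        (sq_nonneg (e 1 1 * sb 1 - e 2 1 * sb 2)) hsum0
      have h0 : (e 0 0 * sb 0 - e 1 0 * sb 1) = 0 :=
        pow_eq_zero_iff (by norm_num) |>.mp hkey.1
      have h1 : (e 0 1 * sb 0 - e 1 1 * sb 1) = 0 :=
        pow_eq_zero_iff (by norm_num) |>.mp hkey.2
      have hvec : sb 0 • e 0 + (-(sb 1)) • e 1 = 0 := by
        ext j
        fin_cases j
        · show sb 0 * e 0 0 + -(sb 1) * e 1 0 = 0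
          linarith
        · show sb 0 * e 0 1 + -(sb 1) * e 1 1 = 0
          linarith
      have := (LinearIndependent.pair_iff.mp hind (sb 0) (-(sb 1)) hvec).1
      exact absurd this (ne_of_gt (hsb 0))
  have hsDne : sD sb e ≠ 0 := ne_of_gt hsDpos
  have hdot : (rvec e - sc • sb) ⬝ᵥ (Dmat sb *ᵥ rvec e) = sN sb e - sc * sD sb e := by
    simp only [sub_dotProduct, smul_dotProduct, smul_eq_mul, hsN, hsD]
  have hmain : cost sb e (stilde sb e) - cost sb e sc =
      -(1 / sD sb e) * (sN sb e - sc * sD sb e) ^ 2 := by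
    rw [hquad (stilde sb e), hquad sc, stilde]
    field_simp
    ring
  refine ⟨by rw [hmain, hdot], ?_, ?_⟩
  · nlinarith [sq_nonneg (sN sb e - sc * sD sb e), hmain, hsDpos,
      mul_nonneg (le_of_lt (one_div_pos.mpr hsDpos)) (sq_nonneg (sN sb e - sc * sD sb e))]
  · constructor
    · intro hEq
      have h2 : (sN sb e - sc * sD sb e) ^ 2 = 0 := by
      
        have hz : -(1 / sD sb e) * (sN sb e - sc * sD sb e) ^ 2 = 0 := by
          rw [← hmain, hEq]; ring
        have hne : -(1 / sD sb e) ≠ 0 := by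
          simp [hsDne]
        exact (mul_eq_zero.mp hz).resolve_left hne
      have h3 : sN sb e - sc * sD sb e = 0 := by
        exact pow_eq_zero_iff (by norm_num) |>.mp h2
      rw [stilde]
      field_simp
      linarith
    · intro hEq
      rw [hEq]
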